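/- The following are equivalent: (1) the Jacobi operator J is essentially self-adjoint; (2) Σ_{k=0}^∞ |p_k(z)|² = ∞ for every z ∈ ℂ ∖ ℝ; (3) Σ_{k=0}^∞ |p_k(z)|² = ∞ for some z ∈ ℂ ∖ ℝ. -/

import Mathlib

open MeasureTheory Polynomial

noncomputable section

instance : Fact ((1 : ENNReal) ≤ 2) := ⟨one_le_two⟩

/-- The Hilbert space `ℓ²(ℤ≥0)`. -/
abbrev JacobiH : Type := lp (fun _ : ℕ => ℂ) 2

/-- The submodule of finitely supported elements of `ℓ²(ℤ≥0)`. -/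
def finSupp : Submodule ℂ JacobiH where
  carrier := {f | (Function.support (f : ℕ → ℂ)).Finite}
  zero_mem' := by
    have : Function.support ((0 : JacobiH) : ℕ → ℂ) = ∅ := by
      ext x; exact ⟨fun h => h rfl, fun h => h.elim⟩
    exact Set.finite_empty.subset this.subset
  add_mem' := by
    intro f g hf hg
    refine (hf.union hg).subset fun x hx => ?_
    by_contra hc
    simp only [Set.mem_union, Function.mem_support, not_or, not_not] at hc
    exact hx (by simp only [Function.mem_support, not_not, lp.coeFn_add, Pi.add_apply,
      hc.1, hc.2, add_zero])
  smul_mem' := by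
    intro c f hf
    refine hf.subset fun x hx => ?_
    by_contra hc
    simp only [Function.mem_support, not_not] at hc
    exact hx (by simp only [Function.mem_support, not_not, lp.coeFn_smul, Pi.smul_apply,
      hc, smul_zero])

/-- The formal Jacobi (tridiagonal) expression with coefficients `a`, `b`, using the
conventions `a_{-1} = 0`, `v_{-1} = 0`. -/
def jacobiApply (a b : ℕ → ℝ) (v : ℕ → ℂ) : ℕ → ℂ
  | 0 => (a 0 : ℂ) * v 1 + (b 0 : ℂ) * v 0
  | (k + 1) => (a (k + 1) : ℂ) * v (k + 2) + (b (k + 1) : ℂ) * v (k + 1) + (a k : ℂ) * v k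
namespace JacobiESA

open scoped ComplexConjugate ENNReal
set_option linter.unusedSectionVars false
open LinearPMap Finset

local notation "⟪" x ", " y "⟫" => @inner ℂ _ _ x y

/-! ### Basic facts about `jacobiApply` -/

theorem jacobiApply_add (a b : ℕ → ℝ) (u v : ℕ → ℂ) (k : ℕ) :
    jacobiApply a b (u + v) k = jacobiApply a b u k + jacobiApply a b v k := by
  cases k <;> simp [jacobiApply] <;> ring

theorem jacobiApply_smul (a b : ℕ → ℝ) (c : ℂ) (u : ℕ → ℂ) (k : ℕ) :
    jacobiApply a b (c • u) k = c * jacobiApply a b u k := by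
  cases k <;> simp [jacobiApply] <;> ring

theorem jacobiApply_support (a b : ℕ → ℝ) (u : ℕ → ℂ) (N : ℕ)
    (hu : ∀ k, N ≤ k → u k = 0) : ∀ k, N + 1 ≤ k → jacobiApply a b u k = 0 := by
  intro k hk
  match k, hk with
  | (m+1), hk =>
    have h1 : u m = 0 := hu m (by omega)
    have h2 : u (m+1) = 0 := hu (m+1) (by omega)
    have h3 : u (m+2) = 0 := hu (m+2) (by omega)
    simp [jacobiApply, h1, h2, h3]

theorem memℓp_of_finite_support {u : ℕ → ℂ} (hu : (Function.support u).Finite) :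
    Memℓp u 2 := by
  apply memℓp_gen
  apply summable_of_ne_finset_zero (s := hu.toFinset)
  intro k hk
  have : u k = 0 := by
    by_contra h
    exact hk (hu.mem_toFinset.2 h)
  rw [this]
  simp [Real.zero_rpow]

/-- The telescoping summation-by-parts identity. -/
theorem jacobi_telescope (a b : ℕ → ℝ) (u v : ℕ → ℂ) : ∀ M : ℕ,
    ∑ k ∈ Finset.range (M + 1),
      (conj (jacobiApply a b u k) * v k - conj (u k) * jacobiApply a b v k) =
      (a M : ℂ) * (conj (u (M + 1)) * v M - conj (u M) * v (M + 1)) := by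
  intro M
  induction M with
  | zero =>
      simp [jacobiApply, _root_.map_add, _root_.map_mul, Complex.conj_ofReal]
      ring
  | succ M ih =>
      rw [Finset.sum_range_succ, ih]
      simp [jacobiApply, _root_.map_add, _root_.map_mul, Complex.conj_ofReal]
      ring

theorem jacobi_sym_tsum (a b : ℕ → ℝ) (u v : ℕ → ℂ) (N : ℕ)
    (hv : ∀ k, N ≤ k → v k = 0) :
    ∑' k, conj (jacobiApply a b u k) * v k = ∑' k, conj (u k) * jacobiApply a b v k := by
  have hJv := jacobiApply_support a b v N hv
  rw [tsum_eq_sum (s := Finset.range (N + 1)) (by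
    intro k hk
    rw [hv k (by simpa using Nat.lt_succ_iff.mp (Nat.lt_of_not_le (fun h => hk (Finset.mem_range.2 (by omega)))))]
    ring)]
  rw [tsum_eq_sum (s := Finset.range (N + 1)) (by
    intro k hk
    rw [hJv k (by simpa using Nat.lt_of_not_le (fun h => hk (Finset.mem_range.2 (by omega))))]
    ring)]
  have htel := jacobi_telescope a b u v N
  rw [hv N le_rfl, hv (N+1) (by omega)] at htel
  simp only [mul_zero, zero_sub, sub_zero, zero_mul, mul_neg, neg_zero] at htel
  have := Finset.sum_sub_distrib (s := Finset.range (N+1))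
    (f := fun k => conj (jacobiApply a b u k) * v k)
    (g := fun k => conj (u k) * jacobiApply a b v k)
  rw [this] at htel
  linear_combination htel


/-! ### The operator `J` and its adjoint -/

theorem finSupp_dense : Dense (finSupp : Set JacobiH) := by
  intro f
  have h := lp.hasSum_single (E := fun _ : ℕ => ℂ) (p := 2) (by norm_num) f
  refine mem_closure_of_tendsto h ?_
  filter_upwards with s
  refine Set.Finite.subset s.finite_toSet ?_
  intro j hj
  simp only [Function.mem_support] at hj
  by_contra hjs
  apply hj
  have : (↑(∑ i ∈ s, lp.single 2 i ((f : ℕ → ℂ) i)) : ℕ → ℂ) j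
      = ∑ i ∈ s, lp.single 2 i ((f : ℕ → ℂ) i) j := by
    rw [lp.coeFn_sum]; simp
  rw [this]
  apply Finset.sum_eq_zero
  intro i hi
  exact lp.single_apply_ne 2 i _ (fun hji => hjs (hji ▸ hi))

theorem dense_dom (J : JacobiH →ₗ.[ℂ] JacobiH) (hdom : J.domain = finSupp) :
    Dense (J.domain : Set JacobiH) := by
  rw [hdom]; exact finSupp_dense

theorem single_mem_finSupp (n : ℕ) (c : ℂ) : lp.single 2 n c ∈ finSupp := by
  show (Function.support _).Finite
  refine (Set.finite_singleton n).subset ?_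
  intro j hj
  simp only [Function.mem_support] at hj
  by_contra hjn
  exact hj (lp.single_apply_ne 2 n _ (by simpa using hjn))

theorem exists_bound_of_finSupp (x : JacobiH) (hx : x ∈ finSupp) :
    ∃ N, ∀ k, N ≤ k → (x : ℕ → ℂ) k = 0 := by
  have hfin : (Function.support (x : ℕ → ℂ)).Finite := hx
  obtain ⟨N, hN⟩ := (hfin.image id).bddAbove
  refine ⟨N + 1, fun k hk => ?_⟩
  by_contra h
  have : k ≤ N := hN ⟨k, by simpa [Function.mem_support] using h, rfl⟩
  omega

theorem inner_eq (f g : JacobiH) :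
    ⟪f, g⟫ = ∑' k, conj ((f : ℕ → ℂ) k) * (g : ℕ → ℂ) k := by
  rw [lp.inner_eq_tsum]
  simp only [RCLike.inner_apply]
  exact tsum_congr fun k => mul_comm _ _

section
variable (a b : ℕ → ℝ) (J : JacobiH →ₗ.[ℂ] JacobiH)
  (hdom : J.domain = finSupp)
  (hact : ∀ (v : J.domain) (k : ℕ),
      (J v : ℕ → ℂ) k = jacobiApply a b ((v : JacobiH) : ℕ → ℂ) k)

include hdom hact

theorem inner_J_right (u : JacobiH) (v : J.domain) :
    ⟪u, J v⟫ = ∑' k, conj ((u : ℕ → ℂ) k) * jacobiApply a b ((v : JacobiH) : ℕ → ℂ) k := by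
  rw [inner_eq]
  congr 1
  funext k
  rw [hact v k]

theorem J_isFormalAdjoint : J.IsFormalAdjoint J := by
  intro x y
  rw [inner_J_right a b J hdom hact (x : JacobiH) y, inner_eq]
  obtain ⟨N, hN⟩ := exists_bound_of_finSupp (y : JacobiH) (hdom ▸ y.2)
  rw [← jacobi_sym_tsum a b (x : JacobiH) ((y : JacobiH) : ℕ → ℂ) N hN]
  congr 1
  funext k
  rw [hact x k]

theorem J_le_adjoint : J ≤ J.adjoint :=
  (J_isFormalAdjoint a b J hdom hact).le_adjoint (dense_dom J hdom)

theorem adjoint_coord (u : J.adjoint.domain) (n : ℕ) :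
    ((J.adjoint u : JacobiH) : ℕ → ℂ) n = jacobiApply a b ((u : JacobiH) : ℕ → ℂ) n := by
  have hy : lp.single 2 n (1 : ℂ) ∈ J.domain := hdom ▸ single_mem_finSupp n 1
  have h := (LinearPMap.adjoint_isFormalAdjoint (dense_dom J hdom)) u ⟨_, hy⟩
  rw [lp.inner_single_right, RCLike.inner_apply, one_mul] at h
  have hN : ∀ k, n + 1 ≤ k → (lp.single 2 n (1:ℂ) : ℕ → ℂ) k = 0 := fun k hk =>
    lp.single_apply_ne 2 n _ (by omega)
  rw [inner_J_right a b J hdom hact, ← jacobi_sym_tsum a b _ _ (n+1) hN] at h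
  rw [tsum_eq_single n (fun k hk => by
    rw [lp.single_apply_ne 2 n _ hk]; ring)] at h
  rw [lp.single_apply_self, mul_one] at h
  exact star_injective h

theorem mem_adjoint_and_apply (u w : JacobiH)
    (hw : ∀ k, (w : ℕ → ℂ) k = jacobiApply a b (u : ℕ → ℂ) k) :
    ∃ hu : u ∈ J.adjoint.domain, J.adjoint ⟨u, hu⟩ = w := by
  have key : ∀ x : J.domain, ⟪w, (x : JacobiH)⟫ = ⟪u, J x⟫ := by
    intro x
    rw [inner_J_right a b J hdom hact, inner_eq]
    obtain ⟨N, hN⟩ := exists_bound_of_finSupp (x : JacobiH) (hdom ▸ x.2)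
    rw [← jacobi_sym_tsum a b (u : ℕ → ℂ) _ N hN]
    congr 1
    funext k
    rw [hw k]
  have hu : u ∈ J.adjoint.domain := LinearPMap.mem_adjoint_domain_of_exists _ ⟨w, key⟩
  exact ⟨hu, LinearPMap.adjoint_apply_eq (dense_dom J hdom) ⟨u, hu⟩ key⟩

theorem finSupp_le_adjoint_dom : finSupp ≤ J.adjoint.domain := by
  intro u hu
  have hfin : (Function.support (u : ℕ → ℂ)).Finite := hu
  obtain ⟨N, hN⟩ := exists_bound_of_finSupp u hu
  have hJfin : (Function.support (jacobiApply a b (u : ℕ → ℂ))).Finite := by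
    refine (Set.finite_Iio (N + 1)).subset ?_
    intro k hk
    simp only [Function.mem_support] at hk
    simp only [Set.mem_Iio]
    by_contra h
    exact hk (jacobiApply_support a b _ N hN k (by omega))
  obtain ⟨hu', -⟩ := mem_adjoint_and_apply a b J hdom hact u
    ⟨jacobiApply a b (u : ℕ → ℂ), memℓp_of_finite_support hJfin⟩ (fun k => rfl)
  exact hu'

theorem dense_adjoint_dom : Dense (J.adjoint.domain : Set JacobiH) :=
  finSupp_dense.mono (finSupp_le_adjoint_dom a b J hdom hact)

end
/-! ### Eigen-sequences and the polynomials -/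

theorem aeval_conj (q : Polynomial ℝ) (z : ℂ) :
    Polynomial.aeval (conj z) q = conj (Polynomial.aeval z q) := by
  have := Polynomial.aeval_algHom_apply (Complex.conjAe) z q
  rw [← Complex.conjAe_coe]
  exact this

theorem summable_sq_iff_memℓp (f : ℕ → ℂ) :
    Memℓp f 2 ↔ Summable (fun k => ‖f k‖ ^ 2) := by
  have hco : (fun k => ‖f k‖ ^ ((2:ℝ≥0∞)).toReal) = fun k => ‖f k‖ ^ 2 := by
    funext k
    rw [show ((2:ℝ≥0∞)).toReal = ((2:ℕ):ℝ) by norm_num, Real.rpow_natCast]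
  constructor
  · intro h
    have := h.summable (p := 2) (by norm_num)
    rwa [hco] at this
  · intro h
    exact memℓp_gen (by rwa [hco])

section
variable (a b : ℕ → ℝ) (hapos : ∀ k, 0 < a k) (pp : ℕ → Polynomial ℝ)
  (hp0 : pp 0 = 1) (hp1 : Polynomial.C (a 0) * pp 1 = Polynomial.X - Polynomial.C (b 0))
  (hrec : ∀ k : ℕ, Polynomial.X * pp (k + 1) =
      Polynomial.C (a (k + 1)) * pp (k + 2) + Polynomial.C (b (k + 1)) * pp (k + 1)
        + Polynomial.C (a k) * pp k)

include hapos hp0 hp1 hrec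

theorem eigen_seq (z : ℂ) (u : ℕ → ℂ) (h : ∀ k, jacobiApply a b u k = z * u k) :
    ∀ k, u k = u 0 * Polynomial.aeval z (pp k) := by
  have key : ∀ k, u k = u 0 * Polynomial.aeval z (pp k)
      ∧ u (k+1) = u 0 * Polynomial.aeval z (pp (k+1)) := by
    intro k
    induction k with
    | zero =>
        constructor
        · rw [hp0]; simp
        · have h0 := h 0
          simp only [jacobiApply] at h0
          have hP1 : (a 0 : ℂ) * Polynomial.aeval z (pp 1) = z - (b 0 : ℂ) := by
            have := congrArg (Polynomial.aeval z) hp1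
            simpa using this
          have ha : (a 0 : ℂ) ≠ 0 := by
            simpa using (hapos 0).ne'
          apply mul_left_cancel₀ ha
          rw [mul_comm (u 0), ← mul_assoc, hP1]
          show (a 0 : ℂ) * u 1 = (z - (b 0 : ℂ)) * u 0
          linear_combination h0
    | succ k ih =>
        obtain ⟨ih1, ih2⟩ := ih
        refine ⟨ih2, ?_⟩
        have hk := h (k+1)
        simp only [jacobiApply] at hk
        have hPrec := congrArg (Polynomial.aeval z) (hrec k)
        simp only [_root_.map_add, _root_.map_mul, Polynomial.aeval_X, Polynomial.aeval_C,
          Complex.coe_algebraMap] at hPrec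
        have ha : (a (k+1) : ℂ) ≠ 0 := by
          simpa using (hapos (k+1)).ne'
        apply mul_left_cancel₀ ha
        rw [ih1, ih2] at hk
        rw [mul_comm (u 0), ← mul_assoc]
        simp only [show k + 1 + 1 = k + 2 from rfl]
        linear_combination hk + u 0 * hPrec
  exact fun k => (key k).1

theorem jacobiApply_poly (z : ℂ) (k : ℕ) :
    jacobiApply a b (fun k => (Polynomial.aeval z (pp k) : ℂ)) k
      = z * Polynomial.aeval z (pp k) := by
  cases k with
  | zero =>
      simp only [jacobiApply]
      have hP1 : (a 0 : ℂ) * Polynomial.aeval z (pp 1) = z - (b 0 : ℂ) := by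
        have := congrArg (Polynomial.aeval z) hp1
        simpa using this
      rw [hp0, hP1]
      simp only [map_one, mul_one]
      ring
  | succ k =>
      simp only [jacobiApply]
      have hPrec := congrArg (Polynomial.aeval z) (hrec k)
      simp only [_root_.map_add, _root_.map_mul, Polynomial.aeval_X, Polynomial.aeval_C,
        Complex.coe_algebraMap] at hPrec
      linear_combination -hPrec

end
/-! ### Eigenvectors of the adjoint vs. summability -/

section
variable (a b : ℕ → ℝ) (hapos : ∀ k, 0 < a k) (pp : ℕ → Polynomial ℝ)
  (hp0 : pp 0 = 1) (hp1 : Polynomial.C (a 0) * pp 1 = Polynomial.X - Polynomial.C (b 0))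
  (hrec : ∀ k : ℕ, Polynomial.X * pp (k + 1) =
      Polynomial.C (a (k + 1)) * pp (k + 2) + Polynomial.C (b (k + 1)) * pp (k + 1)
        + Polynomial.C (a k) * pp k)
  (J : JacobiH →ₗ.[ℂ] JacobiH)
  (hdom : J.domain = finSupp)
  (hact : ∀ (v : J.domain) (k : ℕ),
      (J v : ℕ → ℂ) k = jacobiApply a b ((v : JacobiH) : ℕ → ℂ) k)

include hapos hp0 hp1 hrec hdom hact

theorem exists_eigen_iff (z : ℂ) :
    (∃ u : J.adjoint.domain, (u : JacobiH) ≠ 0 ∧ J.adjoint u = z • (u : JacobiH)) ↔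
      Summable (fun k => ‖(Polynomial.aeval z (pp k) : ℂ)‖ ^ 2) := by
  constructor
  · rintro ⟨u, hu0, hu⟩
    have hcoord : ∀ k, jacobiApply a b ((u : JacobiH) : ℕ → ℂ) k
        = z * ((u : JacobiH) : ℕ → ℂ) k := by
      intro k
      rw [← adjoint_coord a b J hdom hact u k, hu, lp.coeFn_smul, Pi.smul_apply, smul_eq_mul]
    have hrep := eigen_seq a b hapos pp hp0 hp1 hrec z _ hcoord
    have h0 : ((u : JacobiH) : ℕ → ℂ) 0 ≠ 0 := by
      intro h
      apply hu0
      apply lp.ext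
      funext k
      rw [hrep k, h, zero_mul]
      rfl
    have hsum : Summable fun k => ‖((u : JacobiH) : ℕ → ℂ) k‖ ^ 2 :=
      (summable_sq_iff_memℓp _).1 (lp.memℓp (u : JacobiH))
    have h0' : ‖((u : JacobiH) : ℕ → ℂ) 0‖ ≠ 0 := norm_ne_zero_iff.2 h0
    have := hsum.mul_left (‖((u : JacobiH) : ℕ → ℂ) 0‖ ^ 2)⁻¹
    refine this.congr fun k => ?_
    rw [hrep k, norm_mul, mul_pow, ← mul_assoc, inv_mul_cancel₀ (pow_ne_zero 2 h0'), one_mul]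
  · intro hS
    have hmem : Memℓp (fun k => (Polynomial.aeval z (pp k) : ℂ)) 2 :=
      (summable_sq_iff_memℓp _).2 hS
    set w : JacobiH := ⟨fun k => (Polynomial.aeval z (pp k) : ℂ), hmem⟩ with hwdef
    have hJw : ∀ k, ((z • w : JacobiH) : ℕ → ℂ) k = jacobiApply a b (w : ℕ → ℂ) k := by
      intro k
      rw [lp.coeFn_smul, Pi.smul_apply, smul_eq_mul]
      exact (jacobiApply_poly a b hapos pp hp0 hp1 hrec z k).symm
    obtain ⟨hmemadj, happ⟩ := mem_adjoint_and_apply a b J hdom hact w (z • w) hJw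
    refine ⟨⟨w, hmemadj⟩, ?_, happ⟩
    intro hw0
    have hw0' : w = 0 := hw0
    have : (w : ℕ → ℂ) 0 = 0 := by rw [hw0']; simp
    rw [hwdef] at this
    simp only [hp0, map_one] at this
    exact one_ne_zero this

theorem orth_imp_eigen (z : ℂ) (w : JacobiH)
    (hworth : ∀ v : J.domain, ⟪w, J v - z • ((v : JacobiH))⟫ = 0) :
    ∃ hw : w ∈ J.adjoint.domain, J.adjoint ⟨w, hw⟩ = (conj z) • w := by
  have key : ∀ v : J.domain, ⟪(conj z) • w, ((v : JacobiH))⟫ = ⟪w, J v⟫ := by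
    intro v
    have h := hworth v
    rw [inner_sub_right, inner_smul_right, sub_eq_zero] at h
    rw [inner_smul_left, h]
    simp
  exact ⟨LinearPMap.mem_adjoint_domain_of_exists _ ⟨(conj z) • w, key⟩,
    LinearPMap.adjoint_apply_eq (dense_dom J hdom) _ key⟩

theorem eigen_imp_orth (z : ℂ) (u : J.adjoint.domain)
    (hu : J.adjoint u = (conj z) • (u : JacobiH)) :
    ∀ v : J.domain, ⟪(u : JacobiH), J v - z • ((v : JacobiH))⟫ = 0 := by
  intro v
  have h := (LinearPMap.adjoint_isFormalAdjoint (dense_dom J hdom)) u v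
  rw [hu, inner_smul_left] at h
  rw [inner_sub_right, inner_smul_right, ← h]
  simp

theorem orthTriv_iff_not_summable (z : ℂ) :
    (∀ w : JacobiH, (∀ v : J.domain, ⟪w, J v - z • ((v : JacobiH))⟫ = 0) → w = 0) ↔
      ¬ Summable (fun k => ‖(Polynomial.aeval z (pp k) : ℂ)‖ ^ 2) := by
  have hconj : Summable (fun k => ‖(Polynomial.aeval (conj z) (pp k) : ℂ)‖ ^ 2) ↔
      Summable (fun k => ‖(Polynomial.aeval z (pp k) : ℂ)‖ ^ 2) := by
    apply summable_congr
    intro k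
    rw [aeval_conj, RCLike.norm_conj]
  constructor
  · intro hG hS
    obtain ⟨u, hu0, hu⟩ := (exists_eigen_iff a b hapos pp hp0 hp1 hrec J hdom hact (conj z)).2
      (hconj.2 hS)
    exact hu0 (hG (u : JacobiH) (eigen_imp_orth a b hapos pp hp0 hp1 hrec J hdom hact z u hu))
  · intro hnS ww hww
    by_contra hw0
    obtain ⟨hmem, happ⟩ := orth_imp_eigen a b hapos pp hp0 hp1 hrec J hdom hact z ww hww
    exact hnS (hconj.1 ((exists_eigen_iff a b hapos pp hp0 hp1 hrec J hdom hact (conj z)).1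
      ⟨⟨ww, hmem⟩, hw0, happ⟩))

end
/-! ### The lower bound for symmetric operators and propagation of density -/

set_option maxHeartbeats 800000 in
theorem sym_lower (T : JacobiH →ₗ.[ℂ] JacobiH)
    (hsym : ∀ u v : T.domain, ⟪T u, ((v : JacobiH))⟫ = ⟪((u : JacobiH)), T v⟫)
    (z : ℂ) (v : T.domain) :
    |z.im| * ‖(v : JacobiH)‖ ≤ ‖T v - z • (v : JacobiH)‖ := by
  set A : JacobiH := T v - (z.re : ℂ) • (v : JacobiH) with hA
  set B : JacobiH := ((z.im : ℂ) * Complex.I) • (v : JacobiH) with hB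
  have hdecomp : T v - z • (v : JacobiH) = A - B := by
    rw [hA, hB, sub_sub, ← add_smul]
    rw [show (z.re : ℂ) + (z.im : ℂ) * Complex.I = z from Complex.re_add_im z]
  have hsreal : (⟪T v, (v : JacobiH)⟫).im = 0 := by
    have h1 : conj ⟪T v, (v : JacobiH)⟫ = ⟪(v : JacobiH), T v⟫ := inner_conj_symm _ _
    rw [← hsym v v] at h1
    exact Complex.conj_eq_iff_im.mp h1
  have hAv : (⟪A, (v : JacobiH)⟫).im = 0 := by
    rw [hA, inner_sub_left, inner_smul_left]
    have hvv : ⟪(v : JacobiH), (v : JacobiH)⟫ = ((‖(v : JacobiH)‖ : ℂ)) ^ 2 :=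
      inner_self_eq_norm_sq_to_K _
    rw [hvv]
    simp [Complex.sub_im, Complex.mul_im, Complex.conj_ofReal, hsreal, ← Complex.ofReal_pow]
  have hcross : RCLike.re ⟪A, B⟫ = 0 := by
    rw [hB, inner_smul_right]
    have : RCLike.re ((z.im : ℂ) * Complex.I * ⟪A, (v : JacobiH)⟫)
        = ((z.im : ℂ) * Complex.I * ⟪A, (v : JacobiH)⟫).re := rfl
    rw [this]
    simp [Complex.mul_re, Complex.mul_im, hAv]
  have hBnorm : ‖B‖ = |z.im| * ‖(v : JacobiH)‖ := by
    rw [hB, norm_smul, norm_mul, Complex.norm_I, mul_one, Complex.norm_real,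
      Real.norm_eq_abs]
  have hsq : (|z.im| * ‖(v : JacobiH)‖) ^ 2 ≤ ‖T v - z • (v : JacobiH)‖ ^ 2 := by
    rw [hdecomp, @norm_sub_sq ℂ _ _ _ _ A B, hcross, ← hBnorm]
    nlinarith [sq_nonneg ‖A‖, sq_nonneg ‖B‖]
  have h1 := Real.sqrt_le_sqrt hsq
  rwa [Real.sqrt_sq (by positivity), Real.sqrt_sq (norm_nonneg _)] at h1

theorem re_eq_complex (x : ℂ) : RCLike.re x = x.re := rfl

section
variable (a b : ℕ → ℝ) (J : JacobiH →ₗ.[ℂ] JacobiH)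
  (hdom : J.domain = finSupp)
  (hact : ∀ (v : J.domain) (k : ℕ),
      (J v : ℕ → ℂ) k = jacobiApply a b ((v : JacobiH) : ℕ → ℂ) k)

include hdom hact

theorem J_sym : ∀ u v : J.domain, ⟪J u, ((v : JacobiH))⟫ = ⟪((u : JacobiH)), J v⟫ :=
  fun u v => J_isFormalAdjoint a b J hdom hact u v

set_option maxHeartbeats 1000000 in
theorem orthTriv_propagate (z₀ z : ℂ) (him : z₀.im ≠ 0)
    (hG : ∀ w : JacobiH, (∀ v : J.domain, ⟪w, J v - z₀ • ((v : JacobiH))⟫ = 0) → w = 0)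
    (hz : ‖z - z₀‖ < |z₀.im|) :
    ∀ w : JacobiH, (∀ v : J.domain, ⟪w, J v - z • ((v : JacobiH))⟫ = 0) → w = 0 := by
  intro w hw
  -- the range of `J - z₀` is dense
  set L : J.domain →ₗ[ℂ] JacobiH := (J.toFun : J.domain →ₗ[ℂ] JacobiH) - z₀ • J.domain.subtype
    with hL
  have hLapply : ∀ v : J.domain, L v = J v - z₀ • (v : JacobiH) := fun v => rfl
  have hdense : Dense (LinearMap.range L : Set JacobiH) := by
    rw [Submodule.dense_iff_topologicalClosure_eq_top,
      Submodule.topologicalClosure_eq_top_iff]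
    rw [Submodule.eq_bot_iff]
    intro y hy
    apply hG y
    intro v
    have := (Submodule.mem_orthogonal _ y).1 hy (L v) (LinearMap.mem_range_self L v)
    rw [hLapply] at this
    rw [← inner_conj_symm, this]
    simp
  -- key estimate
  have hest : ∀ v : J.domain,
      ‖⟪w, J v - z₀ • ((v : JacobiH))⟫‖
        ≤ (‖z - z₀‖ / |z₀.im|) * ‖w‖ * ‖J v - z₀ • ((v : JacobiH))‖ := by
    intro v
    have h1 : ⟪w, J v - z₀ • ((v : JacobiH))⟫ = (z - z₀) * ⟪w, (v : JacobiH)⟫ := by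
      have : J v - z₀ • ((v : JacobiH))
          = (J v - z • ((v : JacobiH))) + (z - z₀) • (v : JacobiH) := by
        rw [sub_smul]; abel
      rw [this, inner_add_right, hw v, zero_add, inner_smul_right]
    rw [h1]
    have h2 : ‖(z - z₀) * ⟪w, (v : JacobiH)⟫‖
        ≤ ‖z - z₀‖ * (‖w‖ * ‖(v : JacobiH)‖) := by
      rw [norm_mul]
      exact mul_le_mul_of_nonneg_left (norm_inner_le_norm _ _) (norm_nonneg _)
    refine h2.trans ?_
    have h3 : ‖(v : JacobiH)‖ ≤ ‖J v - z₀ • ((v : JacobiH))‖ / |z₀.im| := by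
      rw [le_div_iff₀ (by positivity)]
      have := sym_lower J (J_sym a b J hdom hact) z₀ v
      linarith [this]
    calc ‖z - z₀‖ * (‖w‖ * ‖(v : JacobiH)‖)
        ≤ ‖z - z₀‖ * (‖w‖ * (‖J v - z₀ • ((v : JacobiH))‖ / |z₀.im|)) := by
          gcongr
      _ = (‖z - z₀‖ / |z₀.im|) * ‖w‖ * ‖J v - z₀ • ((v : JacobiH))‖ := by
          field_simp
  -- conclude `w = 0`
  set r : ℝ := ‖z - z₀‖ / |z₀.im| with hr
  have hrlt : r < 1 := (div_lt_one (by positivity)).2 hz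
  have hr0 : 0 ≤ r := by positivity
  have hkey : ∀ ε : ℝ, 0 < ε → ‖w‖ ^ 2 ≤ r * ‖w‖ * (‖w‖ + ε) + ‖w‖ * ε := by
    intro ε hε
    have hwcl : w ∈ closure (LinearMap.range L : Set JacobiH) := by
      rw [hdense.closure_eq]; trivial
    obtain ⟨y, hy, hyd⟩ := Metric.mem_closure_iff.1 hwcl ε hε
    obtain ⟨v, rfl⟩ := hy
    rw [hLapply] at hyd
    have hyd' : ‖w - (J v - z₀ • ((v : JacobiH)))‖ < ε := by
      simpa [dist_eq_norm] using hyd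
    have hips : ‖w‖ ^ 2 = RCLike.re ⟪w, w⟫ := by
      rw [← @inner_self_eq_norm_sq ℂ]
    have hsplit : (⟪w, w⟫ : ℂ) = ⟪w, w - (J v - z₀ • ((v : JacobiH)))⟫
        + ⟪w, J v - z₀ • ((v : JacobiH))⟫ := by
      rw [← inner_add_right]; congr 1; abel
    have h4 : RCLike.re ⟪w, w⟫ ≤ ‖w‖ * ε + r * ‖w‖ * ‖J v - z₀ • ((v : JacobiH))‖ := by
      rw [hsplit, _root_.map_add]
      have e1 : RCLike.re ⟪w, w - (J v - z₀ • ((v : JacobiH)))⟫ ≤ ‖w‖ * ε := by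
        rw [re_eq_complex]
        refine le_trans (Complex.re_le_norm _) ?_
        refine le_trans (norm_inner_le_norm _ _) ?_
        exact mul_le_mul_of_nonneg_left hyd'.le (norm_nonneg _)
      have e2 : RCLike.re ⟪w, J v - z₀ • ((v : JacobiH))⟫
          ≤ r * ‖w‖ * ‖J v - z₀ • ((v : JacobiH))‖ := by
        rw [re_eq_complex]
        exact le_trans (Complex.re_le_norm _) (hest v)
      linarith
    have h5 : ‖J v - z₀ • ((v : JacobiH))‖ ≤ ‖w‖ + ε := by
      have hd : ‖J v - z₀ • ((v : JacobiH)) - w‖ ≤ ε := by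
        rw [norm_sub_rev]
        exact hyd'.le
      calc ‖J v - z₀ • ((v : JacobiH))‖
          = ‖(J v - z₀ • ((v : JacobiH)) - w) + w‖ := by rw [sub_add_cancel]
        _ ≤ ‖J v - z₀ • ((v : JacobiH)) - w‖ + ‖w‖ := norm_add_le _ _
        _ ≤ ε + ‖w‖ := by gcongr
        _ = ‖w‖ + ε := by ring
    rw [hips]
    calc RCLike.re ⟪w, w⟫ ≤ ‖w‖ * ε + r * ‖w‖ * ‖J v - z₀ • ((v : JacobiH))‖ := h4
      _ ≤ ‖w‖ * ε + r * ‖w‖ * (‖w‖ + ε) := by gcongr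
      _ = r * ‖w‖ * (‖w‖ + ε) + ‖w‖ * ε := by ring
  rcases eq_or_lt_of_le (norm_nonneg w) with h0|h0
  · exact norm_eq_zero.1 h0.symm
  exfalso
  set n := ‖w‖ with hn
  have hc : 0 < r * n + n := by nlinarith
  have hle : n ^ 2 - r * n ^ 2 ≤ 0 := by
    refine le_of_forall_pos_le_add ?_
    intro ε hε
    have hk := hkey (ε / (r * n + n)) (by positivity)
    have hmul : (r * n + n) * (ε / (r * n + n)) = ε := mul_div_cancel₀ _ hc.ne'
    nlinarith [hk, hmul]
  nlinarith [mul_pos (mul_pos (sub_pos.2 hrlt) h0) h0]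

end
/-! ### Invariance of the divergence condition on the nonreal complex plane -/

def OT (J : JacobiH →ₗ.[ℂ] JacobiH) (z : ℂ) : Prop :=
  ∀ w : JacobiH, (∀ v : J.domain, ⟪w, J v - z • ((v : JacobiH))⟫ = 0) → w = 0

section
variable (a b : ℕ → ℝ) (J : JacobiH →ₗ.[ℂ] JacobiH)
  (hdom : J.domain = finSupp)
  (hact : ∀ (v : J.domain) (k : ℕ),
      (J v : ℕ → ℂ) k = jacobiApply a b ((v : JacobiH) : ℕ → ℂ) k)

include hdom hact

theorem OT_step (x y x' y' : ℝ) (hy : y ≠ 0)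
    (hdist : Real.sqrt ((x' - x)^2 + (y' - y)^2) < |y|)
    (h : OT J ((x : ℂ) + (y : ℂ) * Complex.I)) :
    OT J ((x' : ℂ) + (y' : ℂ) * Complex.I) := by
  refine orthTriv_propagate a b J hdom hact _ _ ?_ h ?_
  · simp [Complex.add_im, hy]
  · have hdiff : ((x' : ℂ) + (y' : ℂ) * Complex.I) - ((x : ℂ) + (y : ℂ) * Complex.I)
        = ((x' - x : ℝ) : ℂ) + ((y' - y : ℝ) : ℂ) * Complex.I := by
      push_cast; ring
    rw [hdiff]
    have hnorm : ‖((x' - x : ℝ) : ℂ) + ((y' - y : ℝ) : ℂ) * Complex.I‖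
        = Real.sqrt ((x' - x)^2 + (y' - y)^2) := by
      rw [Complex.norm_def, Complex.normSq_add_mul_I]
    rw [hnorm]
    have him : ((x : ℂ) + (y : ℂ) * Complex.I).im = y := by simp
    rw [him]
    exact hdist
  
theorem OT_walk (x₀ y₀ x₁ y₁ : ℝ) (h₀ : 0 < y₀) (h₁ : 0 < y₁)
    (hOT : OT J ((x₀ : ℂ) + (y₀ : ℂ) * Complex.I)) :
    OT J ((x₁ : ℂ) + (y₁ : ℂ) * Complex.I) := by
  have hclimb : ∀ n : ℕ, OT J ((x₀ : ℂ) + ((y₀ * (3/2)^n : ℝ) : ℂ) * Complex.I) := by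
    intro n
    induction n with
    | zero => simpa using hOT
    | succ n ih =>
        refine OT_step a b J hdom hact x₀ (y₀ * (3/2)^n) x₀ (y₀ * (3/2)^(n+1))
          (by positivity) ?_ ih
        have h1 : x₀ - x₀ = 0 := by ring
        have h2 : y₀ * (3/2)^(n+1) - y₀ * (3/2)^n = y₀ * (3/2)^n / 2 := by ring
        rw [h1, h2]
        rw [show (0:ℝ)^2 + (y₀ * (3/2)^n / 2)^2 = (y₀ * (3/2)^n / 2)^2 by ring]
        rw [Real.sqrt_sq (by positivity)]
        rw [abs_of_pos (by positivity)]
        nlinarith [pow_pos (show (0:ℝ) < 3/2 by norm_num) n, h₀]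
  set h : ℝ := |x₁ - x₀| + y₀ + y₁ with hh
  obtain ⟨n, hn⟩ := pow_unbounded_of_one_lt (h / y₀) (show (1:ℝ) < 3/2 by norm_num)
  set Y : ℝ := y₀ * (3/2)^n with hY
  have hYpos : 0 < Y := by positivity
  have hhY : h < Y := by
    rw [hY]
    rw [div_lt_iff₀ h₀] at hn
    linarith [hn]
  have hge1 : |x₁ - x₀| ≤ h := by rw [hh]; linarith
  have hge2 : y₁ ≤ h := by rw [hh]; linarith [abs_nonneg (x₁ - x₀)]
  have hhoriz : OT J ((x₁ : ℂ) + ((Y : ℝ) : ℂ) * Complex.I) := by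
    refine OT_step a b J hdom hact x₀ Y x₁ Y hYpos.ne' ?_ (hclimb n)
    rw [show Y - Y = 0 by ring, show (0:ℝ)^2 = 0 by ring, add_zero,
      Real.sqrt_sq_eq_abs, abs_of_pos hYpos]
    calc |x₁ - x₀| ≤ h := hge1
      _ < Y := hhY
  refine OT_step a b J hdom hact x₁ Y x₁ y₁ hYpos.ne' ?_ hhoriz
  rw [show x₁ - x₁ = 0 by ring, show (0:ℝ)^2 = 0 by ring, zero_add,
    Real.sqrt_sq_eq_abs, abs_of_pos hYpos]
  rw [abs_of_nonpos (by linarith [hge2, hhY])]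
  linarith [h₁]

end
section
variable (a b : ℕ → ℝ) (hapos : ∀ k, 0 < a k) (pp : ℕ → Polynomial ℝ)
  (hp0 : pp 0 = 1) (hp1 : Polynomial.C (a 0) * pp 1 = Polynomial.X - Polynomial.C (b 0))
  (hrec : ∀ k : ℕ, Polynomial.X * pp (k + 1) =
      Polynomial.C (a (k + 1)) * pp (k + 2) + Polynomial.C (b (k + 1)) * pp (k + 1)
        + Polynomial.C (a k) * pp k)
  (J : JacobiH →ₗ.[ℂ] JacobiH)
  (hdom : J.domain = finSupp)
  (hact : ∀ (v : J.domain) (k : ℕ),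
      (J v : ℕ → ℂ) k = jacobiApply a b ((v : JacobiH) : ℕ → ℂ) k)

include hapos hp0 hp1 hrec hdom hact

theorem not_summable_invariant (z₀ z₁ : ℂ) (h₀ : z₀.im ≠ 0) (h₁ : z₁.im ≠ 0)
    (hS : ¬ Summable (fun k => ‖(Polynomial.aeval z₀ (pp k) : ℂ)‖ ^ 2)) :
    ¬ Summable (fun k => ‖(Polynomial.aeval z₁ (pp k) : ℂ)‖ ^ 2) := by
  have hiff : ∀ z : ℂ, OT J z ↔ ¬ Summable (fun k => ‖(Polynomial.aeval z (pp k) : ℂ)‖ ^ 2) :=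
    fun z => orthTriv_iff_not_summable a b hapos pp hp0 hp1 hrec J hdom hact z
  have hconj : ∀ z : ℂ, Summable (fun k => ‖(Polynomial.aeval (conj z) (pp k) : ℂ)‖ ^ 2) ↔
      Summable (fun k => ‖(Polynomial.aeval z (pp k) : ℂ)‖ ^ 2) := by
    intro z
    apply summable_congr
    intro k
    rw [aeval_conj, RCLike.norm_conj]
  have key : ∀ z : ℂ, z.im ≠ 0 →
      (¬ Summable (fun k => ‖(Polynomial.aeval z (pp k) : ℂ)‖ ^ 2) ↔
        OT J ((z.re : ℂ) + ((|z.im| : ℝ) : ℂ) * Complex.I)) := by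
    intro z him
    rcases lt_or_gt_of_ne him with hneg | hpos
    · have hrepr : ((z.re : ℂ) + ((|z.im| : ℝ) : ℂ) * Complex.I) = conj z := by
        rw [abs_of_neg hneg]
        apply Complex.ext <;> simp
      rw [hrepr]
      rw [hiff (conj z), hconj z]
    · have hrepr : ((z.re : ℂ) + ((|z.im| : ℝ) : ℂ) * Complex.I) = z := by
        rw [abs_of_pos hpos]
        exact Complex.re_add_im z
      rw [hrepr, hiff z]
  have h1' := (key z₀ h₀).1 hS
  have h2' := OT_walk a b J hdom hact z₀.re |z₀.im| z₁.re |z₁.im|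
    (abs_pos.2 h₀) (abs_pos.2 h₁) h1'
  exact (key z₁ h₁).2 h2'

end
/-! ### The von Neumann criterion -/

section
variable (a b : ℕ → ℝ) (J : JacobiH →ₗ.[ℂ] JacobiH)
  (hdom : J.domain = finSupp)
  (hact : ∀ (v : J.domain) (k : ℕ),
      (J v : ℕ → ℂ) k = jacobiApply a b ((v : JacobiH) : ℕ → ℂ) k)

include hdom hact

theorem adj_adj_key (y : J.adjoint.adjoint.domain) (v : J.domain) :
    ⟪(J.adjoint.adjoint y : JacobiH), (v : JacobiH)⟫ = ⟪(y : JacobiH), J v⟫ := by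
  have hJle := J_le_adjoint a b J hdom hact
  have h : ⟪(J.adjoint.adjoint y : JacobiH), (v : JacobiH)⟫
      = ⟪(y : JacobiH), J.adjoint (Submodule.inclusion hJle.1 v)⟫ :=
    (LinearPMap.adjoint_isFormalAdjoint (dense_adjoint_dom a b J hdom hact)) y
      (Submodule.inclusion hJle.1 v)
  rw [h]
  congr 1
  exact (LinearPMap.apply_comp_inclusion hJle v).symm

theorem adj_adj_le : J.adjoint.adjoint ≤ J.adjoint := by
  have hmem : ∀ x, x ∈ J.adjoint.adjoint.domain → x ∈ J.adjoint.domain := by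
    intro x hx
    exact LinearPMap.mem_adjoint_domain_of_exists _
      ⟨J.adjoint.adjoint ⟨x, hx⟩, adj_adj_key a b J hdom hact ⟨x, hx⟩⟩
  refine ⟨hmem, ?_⟩
  intro x y hxy
  refine (LinearPMap.adjoint_apply_eq (dense_dom J hdom) y ?_).symm
  intro v
  rw [adj_adj_key a b J hdom hact x v, hxy]

theorem J_le_adj_adj : J ≤ J.adjoint.adjoint := by
  have hFA1 := LinearPMap.adjoint_isFormalAdjoint (dense_dom J hdom)
  have key : ∀ x : J.domain, ∀ u : J.adjoint.domain,
      ⟪J x, (u : JacobiH)⟫ = ⟪(x : JacobiH), J.adjoint u⟫ := by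
    intro x u
    have h := hFA1 u x
    calc ⟪J x, (u : JacobiH)⟫ = conj ⟪(u : JacobiH), J x⟫ := (inner_conj_symm _ _).symm
      _ = conj ⟪J.adjoint u, (x : JacobiH)⟫ := by rw [h]
      _ = ⟪(x : JacobiH), J.adjoint u⟫ := inner_conj_symm _ _
  have hmem : ∀ x, x ∈ J.domain → x ∈ J.adjoint.adjoint.domain := by
    intro x hx
    refine LinearPMap.mem_adjoint_domain_of_exists _ ⟨J ⟨x, hx⟩, ?_⟩
    intro u
    exact key ⟨x, hx⟩ u
  refine ⟨hmem, ?_⟩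
  intro x y hxy
  refine (LinearPMap.adjoint_apply_eq (dense_adjoint_dom a b J hdom hact) y ?_).symm
  intro u
  have : (x : JacobiH) = (y : JacobiH) := hxy
  rw [← this]
  exact key x u

theorem adj_adj_sym : ∀ u v : J.adjoint.adjoint.domain,
    ⟪J.adjoint.adjoint u, ((v : JacobiH))⟫ = ⟪((u : JacobiH)), J.adjoint.adjoint v⟫ := by
  intro u v
  have hle := adj_adj_le a b J hdom hact
  have h : ⟪J.adjoint.adjoint u, ((v : JacobiH))⟫
      = ⟪((u : JacobiH)), J.adjoint (Submodule.inclusion hle.1 v)⟫ :=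
    (LinearPMap.adjoint_isFormalAdjoint (dense_adjoint_dom a b J hdom hact)) u
      (Submodule.inclusion hle.1 v)
  rw [h]
  congr 1
  exact (LinearPMap.apply_comp_inclusion hle v).symm

theorem adj2_closed_point (u y : JacobiH)
    (h : ∀ x : J.adjoint.domain, ⟪y, (x : JacobiH)⟫ = ⟪u, J.adjoint x⟫) :
    ∃ hu : u ∈ J.adjoint.adjoint.domain, J.adjoint.adjoint ⟨u, hu⟩ = y :=
  ⟨LinearPMap.mem_adjoint_domain_of_exists _ ⟨y, h⟩,
    LinearPMap.adjoint_apply_eq (dense_adjoint_dom a b J hdom hact) _ h⟩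

end
section
open Filter Topology
variable (a b : ℕ → ℝ) (hapos : ∀ k, 0 < a k) (pp : ℕ → Polynomial ℝ)
  (hp0 : pp 0 = 1) (hp1 : Polynomial.C (a 0) * pp 1 = Polynomial.X - Polynomial.C (b 0))
  (hrec : ∀ k : ℕ, Polynomial.X * pp (k + 1) =
      Polynomial.C (a (k + 1)) * pp (k + 2) + Polynomial.C (b (k + 1)) * pp (k + 1)
        + Polynomial.C (a k) * pp k)
  (J : JacobiH →ₗ.[ℂ] JacobiH)
  (hdom : J.domain = finSupp)
  (hact : ∀ (v : J.domain) (k : ℕ),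
      (J v : ℕ → ℂ) k = jacobiApply a b ((v : JacobiH) : ℕ → ℂ) k)

include hapos hp0 hp1 hrec hdom hact

set_option maxHeartbeats 1000000 in
theorem esa_of_not_summable
    (hnS : ∀ z : ℂ, z.im ≠ 0 → ¬ Summable (fun k => ‖(Polynomial.aeval z (pp k) : ℂ)‖ ^ 2)) :
    J.adjoint.adjoint = J.adjoint := by
  have hle2 := adj_adj_le a b J hdom hact
  have hleJ := J_le_adj_adj a b J hdom hact
  have hGi : OT J Complex.I :=
    (orthTriv_iff_not_summable a b hapos pp hp0 hp1 hrec J hdom hact Complex.I).2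
      (hnS _ (by simp))
  set T := J.adjoint.adjoint with hT
  set L2 : T.domain →ₗ[ℂ] JacobiH := (T.toFun : T.domain →ₗ[ℂ] JacobiH)
      - Complex.I • T.domain.subtype with hL2
  have hL2apply : ∀ v : T.domain, L2 v = T v - Complex.I • (v : JacobiH) := fun v => rfl
  have hsym2 := adj_adj_sym a b J hdom hact
  have hlow : ∀ v : T.domain, ‖(v : JacobiH)‖ ≤ ‖T v - Complex.I • (v : JacobiH)‖ := by
    intro v
    have h := sym_lower T hsym2 Complex.I v
    simpa using h
  have hclosed : IsClosed ((LinearMap.range L2 : Submodule ℂ JacobiH) : Set JacobiH) := by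
    apply IsSeqClosed.isClosed
    intro seq y hmem hlim
    have hex : ∀ n, ∃ v : T.domain, L2 v = seq n := fun n => hmem n
    choose vf hvf using hex
    have hdist : ∀ m n, dist ((vf m : JacobiH)) ((vf n : JacobiH)) ≤ dist (seq m) (seq n) := by
      intro m n
      rw [dist_eq_norm, dist_eq_norm]
      calc ‖(vf m : JacobiH) - (vf n : JacobiH)‖
          = ‖((vf m - vf n : T.domain) : JacobiH)‖ := by rw [Submodule.coe_sub]
        _ ≤ ‖T (vf m - vf n) - Complex.I • ((vf m - vf n : T.domain) : JacobiH)‖ := hlow _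
        _ = ‖L2 (vf m - vf n)‖ := by rw [hL2apply]
        _ = ‖L2 (vf m) - L2 (vf n)‖ := by rw [_root_.map_sub]
        _ = ‖seq m - seq n‖ := by rw [hvf m, hvf n]
    have hcs : CauchySeq (fun n => (vf n : JacobiH)) := by
      rw [Metric.cauchySeq_iff]
      intro ε hε
      obtain ⟨N, hN⟩ := Metric.cauchySeq_iff.1 hlim.cauchySeq ε hε
      exact ⟨N, fun m hm n hn => lt_of_le_of_lt (hdist m n) (hN m hm n hn)⟩
    obtain ⟨vinf, hvinf⟩ := cauchySeq_tendsto_of_complete hcs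
    have hTlim : Tendsto (fun n => T (vf n)) atTop (𝓝 (y + Complex.I • vinf)) := by
      have heq : ∀ n, seq n + Complex.I • (vf n : JacobiH) = T (vf n) := by
        intro n
        rw [← hvf n, hL2apply]
        abel
      exact Tendsto.congr heq (hlim.add (hvinf.const_smul Complex.I))
    have hrel : ∀ x : J.adjoint.domain,
        ⟪y + Complex.I • vinf, (x : JacobiH)⟫ = ⟪vinf, J.adjoint x⟫ := by
      intro x
      have hn : ∀ n, ⟪T (vf n), (x : JacobiH)⟫ = ⟪(vf n : JacobiH), J.adjoint x⟫ := fun n =>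
        (LinearPMap.adjoint_isFormalAdjoint (dense_adjoint_dom a b J hdom hact)) (vf n) x
      have t1 : Tendsto (fun n => ⟪T (vf n), (x : JacobiH)⟫) atTop
          (𝓝 ⟪y + Complex.I • vinf, (x : JacobiH)⟫) :=
        hTlim.inner tendsto_const_nhds
      have t2 : Tendsto (fun n => ⟪(vf n : JacobiH), J.adjoint x⟫) atTop
          (𝓝 ⟪vinf, J.adjoint x⟫) :=
        hvinf.inner tendsto_const_nhds
      exact tendsto_nhds_unique (Tendsto.congr hn t1) t2
    obtain ⟨hmemv, happv⟩ := adj2_closed_point a b J hdom hact vinf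
      (y + Complex.I • vinf) hrel
    refine ⟨⟨vinf, hmemv⟩, ?_⟩
    rw [hL2apply]
    have : T ⟨vinf, hmemv⟩ = y + Complex.I • vinf := happv
    rw [this]
    have hco : ((⟨vinf, hmemv⟩ : T.domain) : JacobiH) = vinf := rfl
    rw [hco]
    abel
  have hdense2 : Dense ((LinearMap.range L2 : Submodule ℂ JacobiH) : Set JacobiH) := by
    rw [Submodule.dense_iff_topologicalClosure_eq_top, Submodule.topologicalClosure_eq_top_iff,
      Submodule.eq_bot_iff]
    intro y hy
    apply hGi y
    intro v
    set w : T.domain := Submodule.inclusion hleJ.1 v with hwdef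
    have hval : T w = J v := (LinearPMap.apply_comp_inclusion hleJ v).symm
    have hmem : J v - Complex.I • ((v : JacobiH)) ∈ LinearMap.range L2 := by
      refine ⟨w, ?_⟩
      rw [hL2apply, hval]
      rfl
    have horth := (Submodule.mem_orthogonal _ y).1 hy _ hmem
    rw [← inner_conj_symm, horth]
    simp
  have htop : (LinearMap.range L2 : Submodule ℂ JacobiH) = ⊤ := by
    have h1 := IsClosed.submodule_topologicalClosure_eq hclosed
    have h2 := Submodule.dense_iff_topologicalClosure_eq_top.1 hdense2
    rw [← h1, h2]
  have hmemval : ∀ u : J.adjoint.domain, ∃ hu2 : (u : JacobiH) ∈ T.domain,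
      T ⟨(u : JacobiH), hu2⟩ = J.adjoint u := by
    intro u
    have hy : J.adjoint u - Complex.I • (u : JacobiH) ∈ LinearMap.range L2 := by
      rw [htop]; trivial
    obtain ⟨w, hw⟩ := hy
    rw [hL2apply] at hw
    set w' : J.adjoint.domain := Submodule.inclusion hle2.1 w with hw'def
    have hvalw : J.adjoint w' = T w := (LinearPMap.apply_comp_inclusion hle2 w).symm
    set D : J.adjoint.domain := u - w' with hDdef
    have hDco : ((D : JacobiH)) = (u : JacobiH) - (w : JacobiH) := rfl
    have hDval : J.adjoint D = Complex.I • ((D : JacobiH)) := by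
      rw [hDdef, LinearPMap.map_sub, hvalw]
      have hTw : T w = J.adjoint u - Complex.I • (u : JacobiH) + Complex.I • (w : JacobiH) := by
        rw [← hw]; abel
      rw [hTw]
      rw [show ((u - w' : J.adjoint.domain) : JacobiH) = (u : JacobiH) - (w : JacobiH) from rfl]
      rw [smul_sub]
      abel
    by_cases hD0 : ((D : JacobiH)) = 0
    · have hcoe : (u : JacobiH) = (w : JacobiH) := by
        have h0 : (u : JacobiH) - (w : JacobiH) = 0 := by rw [← hDco]; exact hD0
        exact sub_eq_zero.1 h0
      have hu2 : (u : JacobiH) ∈ T.domain := by rw [hcoe]; exact w.2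
      refine ⟨hu2, ?_⟩
      have hsub : (⟨(u : JacobiH), hu2⟩ : T.domain) = w := Subtype.ext hcoe
      rw [hsub]
      have hw2 : T w - Complex.I • (u : JacobiH) = J.adjoint u - Complex.I • (u : JacobiH) := by
        rw [← hcoe] at hw
        exact hw
      exact sub_left_inj.1 hw2
    · exfalso
      have heig := (exists_eigen_iff a b hapos pp hp0 hp1 hrec J hdom hact Complex.I).1
        ⟨D, hD0, hDval⟩
      exact hnS Complex.I (by simp) heig
  have hle1 : J.adjoint ≤ T := by
    refine ⟨fun x hx => ?_, fun x y hxy => ?_⟩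
    · obtain ⟨h2, -⟩ := hmemval ⟨x, hx⟩
      exact h2
    · obtain ⟨h2, hval⟩ := hmemval x
      have hyx : y = ⟨(x : JacobiH), h2⟩ := Subtype.ext hxy.symm
      rw [hyx, hval]
  exact LinearPMap.eq_of_le_of_domain_eq hle2 (le_antisymm hle2.1 hle1.1)

end
theorem pmap_le_refl (f : JacobiH →ₗ.[ℂ] JacobiH) : f ≤ f :=
  ⟨le_rfl, fun x y hxy => by rw [Subtype.ext hxy]⟩

section
variable (a b : ℕ → ℝ) (hapos : ∀ k, 0 < a k) (pp : ℕ → Polynomial ℝ)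
  (hp0 : pp 0 = 1) (hp1 : Polynomial.C (a 0) * pp 1 = Polynomial.X - Polynomial.C (b 0))
  (hrec : ∀ k : ℕ, Polynomial.X * pp (k + 1) =
      Polynomial.C (a (k + 1)) * pp (k + 2) + Polynomial.C (b (k + 1)) * pp (k + 1)
        + Polynomial.C (a k) * pp k)
  (J : JacobiH →ₗ.[ℂ] JacobiH)
  (hdom : J.domain = finSupp)
  (hact : ∀ (v : J.domain) (k : ℕ),
      (J v : ℕ → ℂ) k = jacobiApply a b ((v : JacobiH) : ℕ → ℂ) k)

include hapos hp0 hp1 hrec hdom hact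

theorem not_summable_of_esa (hA : J.adjoint.adjoint = J.adjoint) :
    ∀ z : ℂ, z.im ≠ 0 → ¬ Summable (fun k => ‖(Polynomial.aeval z (pp k) : ℂ)‖ ^ 2) := by
  intro z hz hS
  obtain ⟨u, hu0, hu⟩ :=
    (exists_eigen_iff a b hapos pp hp0 hp1 hrec J hdom hact z).2 hS
  have hge : J.adjoint ≤ J.adjoint.adjoint := by rw [hA]
  have hsym : ⟪J.adjoint u, (u : JacobiH)⟫ = ⟪(u : JacobiH), J.adjoint u⟫ := by
    have hFA := LinearPMap.adjoint_isFormalAdjoint (dense_adjoint_dom a b J hdom hact)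
    have h : ⟪J.adjoint.adjoint (Submodule.inclusion hge.1 u), (u : JacobiH)⟫
        = ⟪((Submodule.inclusion hge.1 u : J.adjoint.adjoint.domain) : JacobiH),
            J.adjoint u⟫ := hFA (Submodule.inclusion hge.1 u) u
    rw [← LinearPMap.apply_comp_inclusion hge u] at h
    exact h
  rw [hu, inner_smul_left, inner_smul_right] at hsym
  have huu : ⟪(u : JacobiH), (u : JacobiH)⟫ ≠ 0 := inner_self_ne_zero.2 hu0
  have hzz : conj z = z := mul_right_cancel₀ huu hsym
  exact hz (Complex.conj_eq_iff_im.1 hzz)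

end
end JacobiESA

/-- The Jacobi operator `J` (with domain the finitely supported sequences) is essentially
self-adjoint (`J** = J*`) if and only if `Σ_k |p_k(z)|² = ∞` for every `z ∈ ℂ \ ℝ`, if and
only if `Σ_k |p_k(z)|² = ∞` for some `z ∈ ℂ \ ℝ`, where `(p_k)` are the polynomials generated
by the three-term recurrence with coefficients `(a_k, b_k)`. -/
theorem essentially_selfAdjoint_iff_divergence (a b : ℕ → ℝ) (hapos : ∀ k, 0 < a k)
    (p : ℕ → Polynomial ℝ)
    (hp0 : p 0 = 1) (hp1 : C (a 0) * p 1 = X - C (b 0))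
    (hrec : ∀ k : ℕ, X * p (k + 1) =
      C (a (k + 1)) * p (k + 2) + C (b (k + 1)) * p (k + 1) + C (a k) * p k)
    (J : JacobiH →ₗ.[ℂ] JacobiH) (hdom : J.domain = finSupp)
    (hact : ∀ (v : J.domain) (k : ℕ),
      (J v : ℕ → ℂ) k = jacobiApply a b ((v : JacobiH) : ℕ → ℂ) k) :
    (J.adjoint.adjoint = J.adjoint ↔
      ∀ z : ℂ, z.im ≠ 0 → ¬ Summable (fun k : ℕ => ‖Polynomial.aeval z (p k)‖ ^ 2)) ∧
    (J.adjoint.adjoint = J.adjoint ↔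
      ∃ z : ℂ, z.im ≠ 0 ∧ ¬ Summable (fun k : ℕ => ‖Polynomial.aeval z (p k)‖ ^ 2)) := by
  constructor
  · constructor
    · intro hA
      exact JacobiESA.not_summable_of_esa a b hapos p hp0 hp1 hrec J hdom hact hA
    · intro hP
      exact JacobiESA.esa_of_not_summable a b hapos p hp0 hp1 hrec J hdom hact hP
  · constructor
    · intro hA
      exact ⟨Complex.I, by simp,
        JacobiESA.not_summable_of_esa a b hapos p hp0 hp1 hrec J hdom hact hA Complex.I
          (by simp)⟩
    · rintro ⟨z₀, h₀, hS⟩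
      apply JacobiESA.esa_of_not_summable a b hapos p hp0 hp1 hrec J hdom hact
      intro z hz
      exact JacobiESA.not_summable_invariant a b hapos p hp0 hp1 hrec J hdom hact z₀ z h₀ hz hS
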